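/- If V is partitioned into a and b and M is a square matrix with all principal submatrices invertible, then partial inversion of M with respect to a equals partial inversion of M⁻¹ with respect to b: inv_a M = inv_b M⁻¹. -/

import Mathlib

/-- Partial inversion of a square real matrix with respect to a single index `k`. -/
noncomputable def invStep {ι : Type*} [DecidableEq ι] (M : Matrix ι ι ℝ) (k : ι) : Matrix ι ι ℝ :=
  Matrix.of fun i j =>
    if i = k then (if j = k then 1 / M k k else - M k j / M k k)
    else if j = k then M i k / M k k
    else M i j - M i k * M k j / M k k

/-- Partial inversion with respect to a sequence of indices, applied in order. -/
noncomputable def invList {ι : Type*} [DecidableEq ι] (l : List ι) (M : Matrix ι ι ℝ) : Matrix ι ι ℝ :=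
  l.foldl invStep M

/-- All principal submatrices of `M` are invertible. -/
def allPrincipalInvertible {ι : Type*} [Fintype ι] [DecidableEq ι]
    (M : Matrix ι ι ℝ) : Prop :=
  ∀ s : Finset ι,
    (M.submatrix (fun i : s => (i : ι)) (fun i : s => (i : ι))).det ≠ 0

section Aux

open Matrix

variable {ι : Type*} [Fintype ι] [DecidableEq ι]

/-- Mix two vectors along a finset. -/
def pmix (S : Finset ι) (u v : ι → ℝ) : ι → ℝ := fun i => if i ∈ S then u i else v i

/-- `N` is the partial inversion of `A` w.r.t. the index set `S`. -/
def PIr (A : Matrix ι ι ℝ) (S : Finset ι) (N : Matrix ι ι ℝ) : Prop :=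
  ∀ x : ι → ℝ, N *ᵥ pmix S (A *ᵥ x) x = pmix S x (A *ᵥ x)

lemma PIr_self (A : Matrix ι ι ℝ) : PIr A ∅ A := by
  intro x
  have h : pmix (∅ : Finset ι) (A *ᵥ x) x = x := by funext i; simp [pmix]
  rw [h]
  funext i; simp [pmix]

lemma invStep_mulVec (N : Matrix ι ι ℝ) (k : ι) (hkk : N k k ≠ 0) (p : ι → ℝ) :
    invStep N k *ᵥ Function.update p k ((N *ᵥ p) k) = Function.update (N *ᵥ p) k (p k) := by
  have hsum : ∀ (Q : Matrix ι ι ℝ) (v : ι → ℝ) (i : ι),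
      (Q *ᵥ v) i = Q i k * v k + ∑ j ∈ Finset.univ.erase k, Q i j * v j := by
    intro Q v i
    rw [Matrix.mulVec, dotProduct, ← Finset.add_sum_erase _ _ (Finset.mem_univ k)]
  funext i
  by_cases hik : i = k
  · subst hik
    rw [Function.update_self, hsum, Function.update_self]
    have hE : ∑ j ∈ Finset.univ.erase i, invStep N i i j * (Function.update p i ((N *ᵥ p) i)) j
        = -(1 / N i i) * ∑ j ∈ Finset.univ.erase i, N i j * p j := by
      rw [Finset.mul_sum]
      refine Finset.sum_congr rfl fun j hj => ?_
      have hj' : j ≠ i := Finset.ne_of_mem_erase hj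
      rw [Function.update_of_ne hj']
      have he : invStep N i i j = - N i j / N i i := by simp [invStep, hj']
      rw [he]; ring
    rw [hE]
    have hent : invStep N i i i = 1 / N i i := by simp [invStep]
    rw [hent, hsum N p i]
    field_simp
    ring
  · rw [Function.update_of_ne hik, hsum, Function.update_self]
    have hE : ∑ j ∈ Finset.univ.erase k, invStep N k i j * (Function.update p k ((N *ᵥ p) k)) j
        = (∑ j ∈ Finset.univ.erase k, N i j * p j)
          - (N i k / N k k) * ∑ j ∈ Finset.univ.erase k, N k j * p j := by
      rw [Finset.mul_sum, ← Finset.sum_sub_distrib]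
      refine Finset.sum_congr rfl fun j hj => ?_
      have hj' : j ≠ k := Finset.ne_of_mem_erase hj
      rw [Function.update_of_ne hj']
      have he : invStep N k i j = N i j - N i k * N k j / N k k := by
        simp [invStep, hik, hj']
      rw [he]; ring
    have hent : invStep N k i k = N i k / N k k := by simp [invStep, hik]
    rw [hE, hent, hsum N p i, hsum N p k]
    field_simp
    ring

lemma PIr_step {A N : Matrix ι ι ℝ} {S : Finset ι} {k : ι} (hk : k ∉ S)
    (hkk : N k k ≠ 0) (h : PIr A S N) : PIr A (insert k S) (invStep N k) := by
  intro x
  have h1 := invStep_mulVec N k hkk (pmix S (A *ᵥ x) x)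
  rw [h x] at h1
  have e1 : Function.update (pmix S (A *ᵥ x) x) k (pmix S x (A *ᵥ x) k)
      = pmix (insert k S) (A *ᵥ x) x := by
    funext i
    rcases eq_or_ne i k with rfl | hik
    · rw [Function.update_self]; simp [pmix, hk]
    · rw [Function.update_of_ne hik]; simp [pmix, Finset.mem_insert, hik]
  have e2 : Function.update (pmix S x (A *ᵥ x)) k (pmix S (A *ᵥ x) x k)
      = pmix (insert k S) x (A *ᵥ x) := by
    funext i
    rcases eq_or_ne i k with rfl | hik
    · rw [Function.update_self]; simp [pmix, hk]
    · rw [Function.update_of_ne hik]; simp [pmix, Finset.mem_insert, hik]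
  rw [e1, e2] at h1
  exact h1

lemma supp_inj {M : Matrix ι ι ℝ} (hM : allPrincipalInvertible M) (s : Finset ι) (x : ι → ℝ)
    (h0 : ∀ i ∉ s, x i = 0) (h1 : ∀ i ∈ s, (M *ᵥ x) i = 0) : x = 0 := by
  set A := M.submatrix (fun i : s => (i : ι)) (fun i : s => (i : ι)) with hA
  have hdet : IsUnit A.det := isUnit_iff_ne_zero.2 (hM s)
  have hAy : A *ᵥ (fun j : s => x j) = 0 := by
    funext i
    have e1 : (A *ᵥ fun j : s => x j) i = ∑ j : s, M i j * x j := by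
      simp [Matrix.mulVec, dotProduct, hA]
    rw [e1, Finset.sum_coe_sort s (fun j => M (i : ι) j * x j)]
    have e2 : ∑ j ∈ s, M (i : ι) j * x j = ∑ j, M (i : ι) j * x j := by
      refine Finset.sum_subset (Finset.subset_univ s) fun j _ hj => ?_
      rw [h0 j hj, mul_zero]
    rw [e2]
    exact h1 i i.2
  have hy : (fun j : s => x j) = 0 := by
    have h2 := congrArg (fun v => A⁻¹ *ᵥ v) hAy
    simpa [Matrix.mulVec_mulVec, Matrix.nonsing_inv_mul A hdet, Matrix.one_mulVec,
      Matrix.mulVec_zero] using h2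
  funext i
  by_cases hi : i ∈ s
  · exact congrFun hy ⟨i, hi⟩
  · exact h0 i hi

/-- The mixing map as a linear map. -/
noncomputable def phiL (M : Matrix ι ι ℝ) (S : Finset ι) : (ι → ℝ) →ₗ[ℝ] (ι → ℝ) where
  toFun x := pmix S (M *ᵥ x) x
  map_add' x y := by
    funext i
    by_cases hi : i ∈ S <;> simp [pmix, hi, Matrix.mulVec_add]
  map_smul' r x := by
    funext i
    by_cases hi : i ∈ S <;> simp [pmix, hi, Matrix.mulVec_smul]

lemma phi_surj {M : Matrix ι ι ℝ} (hM : allPrincipalInvertible M) (S : Finset ι) :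
    Function.Surjective (phiL M S) := by
  rw [← LinearMap.injective_iff_surjective]
  refine (injective_iff_map_eq_zero (phiL M S)).2 fun x hx => ?_
  refine supp_inj hM S x (fun i hi => ?_) (fun i hi => ?_)
  · have h2 := congrFun hx i
    simpa [phiL, pmix, hi] using h2
  · have h2 := congrFun hx i
    simpa [phiL, pmix, hi] using h2

lemma PIr_unique {M : Matrix ι ι ℝ} (hM : allPrincipalInvertible M) {S : Finset ι}
    {N N' : Matrix ι ι ℝ} (h : PIr M S N) (h' : PIr M S N') : N = N' := by
  have key : ∀ z, N *ᵥ z = N' *ᵥ z := by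
    intro z
    obtain ⟨x, hx⟩ := phi_surj hM S z
    have hx' : pmix S (M *ᵥ x) x = z := hx
    rw [← hx', h x, h' x]
  ext i j
  have h2 := congrFun (key (Pi.single j 1)) i
  simpa [Matrix.mulVec_single] using h2

lemma pivot_not_mem {M : Matrix ι ι ℝ} (hM : allPrincipalInvertible M) {S : Finset ι} {k : ι}
    (hk : k ∉ S) {N : Matrix ι ι ℝ} (hN : PIr M S N) : N k k ≠ 0 := by
  obtain ⟨x, hx⟩ := phi_surj hM S (Pi.single k 1)
  have hx' : pmix S (M *ᵥ x) x = Pi.single k 1 := hx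
  have h2 := hN x
  rw [hx'] at h2
  have hNkk : N k k = (M *ᵥ x) k := by
    have h3 := congrFun h2 k
    simpa [Matrix.mulVec_single, pmix, hk] using h3
  have hxo : ∀ i ∉ S, x i = (Pi.single k 1 : ι → ℝ) i := by
    intro i hi
    have h3 := congrFun hx' i
    simpa [pmix, hi] using h3
  have hxS : ∀ i ∈ S, (M *ᵥ x) i = 0 := by
    intro i hi
    have h3 := congrFun hx' i
    simp only [pmix, if_pos hi] at h3
    rw [h3, Pi.single_eq_of_ne (by rintro rfl; exact hk hi)]
  intro h0
  have hz : x = 0 := by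
    refine supp_inj hM (insert k S) x (fun i hi => ?_) (fun i hi => ?_)
    · rw [Finset.mem_insert, not_or] at hi
      rw [hxo i hi.2, Pi.single_eq_of_ne hi.1]
    · rcases Finset.mem_insert.1 hi with rfl | hi'
      · rw [← hNkk]; exact h0
      · exact hxS i hi'
  have hone : x k = 1 := by rw [hxo k hk]; simp
  rw [hz] at hone
  simp at hone

lemma pivot_mem {M : Matrix ι ι ℝ} (hM : allPrincipalInvertible M) {S : Finset ι} {k : ι}
    (hk : k ∈ S) {N : Matrix ι ι ℝ} (hN : PIr M S N) : N k k ≠ 0 := by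
  obtain ⟨x, hx⟩ := phi_surj hM S (Pi.single k 1)
  have hx' : pmix S (M *ᵥ x) x = Pi.single k 1 := hx
  have h2 := hN x
  rw [hx'] at h2
  have hNkk : N k k = x k := by
    have h3 := congrFun h2 k
    simpa [Matrix.mulVec_single, pmix, hk] using h3
  have hxo : ∀ i ∉ S, x i = 0 := by
    intro i hi
    have h3 := congrFun hx' i
    simp only [pmix, if_neg hi] at h3
    rw [h3, Pi.single_eq_of_ne (by rintro rfl; exact hi hk)]
  have hxS : ∀ i ∈ S, (M *ᵥ x) i = (Pi.single k 1 : ι → ℝ) i := by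
    intro i hi
    have h3 := congrFun hx' i
    simpa [pmix, hi] using h3
  intro h0
  have hz : x = 0 := by
    refine supp_inj hM (S.erase k) x (fun i hi => ?_) (fun i hi => ?_)
    · rcases eq_or_ne i k with rfl | hik
      · rw [hNkk] at h0; exact h0
      · exact hxo i fun h => hi (Finset.mem_erase.2 ⟨hik, h⟩)
    · rw [hxS i (Finset.mem_erase.1 hi).2, Pi.single_eq_of_ne (Finset.mem_erase.1 hi).1]
  have hone : (M *ᵥ x) k = 1 := by rw [hxS k hk]; simp
  rw [hz] at hone
  simp [Matrix.mulVec_zero] at hone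

lemma PIr_inv_compl {M : Matrix ι ι ℝ} (hdet : M.det ≠ 0) {t : Finset ι} {N : Matrix ι ι ℝ}
    (h : PIr M⁻¹ t N) : PIr M tᶜ N := by
  intro x
  have h1 := h (M *ᵥ x)
  have hMx : M⁻¹ *ᵥ (M *ᵥ x) = x := by
    rw [Matrix.mulVec_mulVec, Matrix.nonsing_inv_mul M (isUnit_iff_ne_zero.2 hdet),
      Matrix.one_mulVec]
  rw [hMx] at h1
  have e1 : pmix t x (M *ᵥ x) = pmix tᶜ (M *ᵥ x) x := by
    funext i; by_cases hi : i ∈ t <;> simp [pmix, hi]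
  have e2 : pmix t (M *ᵥ x) x = pmix tᶜ x (M *ᵥ x) := by
    funext i; by_cases hi : i ∈ t <;> simp [pmix, hi]
  rw [e1, e2] at h1
  exact h1

lemma PIr_chain {M : Matrix ι ι ℝ} (hM : allPrincipalInvertible M) (l : List ι) :
    ∀ (t : Finset ι) (N : Matrix ι ι ℝ), (∀ k ∈ l, k ∉ t) → l.Nodup →
      PIr M t N → PIr M (t ∪ l.toFinset) (invList l N) := by
  induction l with
  | nil => intro t N _ _ h; simpa [invList] using h
  | cons k l ih =>
    intro t N hd hn h
    have hk : k ∉ t := hd k (List.mem_cons_self)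
    have hp : N k k ≠ 0 := pivot_not_mem hM hk h
    have h1 : PIr M (insert k t) (invStep N k) := PIr_step hk hp h
    have h2 := ih (insert k t) (invStep N k) ?_ (List.Nodup.of_cons hn) h1
    · have hset : insert k t ∪ l.toFinset = t ∪ (k :: l).toFinset := by
        ext j; simp only [Finset.mem_union, Finset.mem_insert, List.toFinset_cons]; tauto
      rw [hset] at h2
      simpa [invList] using h2
    · intro j hj
      simp only [Finset.mem_insert, not_or]
      refine ⟨?_, hd j (List.mem_cons_of_mem k hj)⟩
      rintro rfl
      exact (List.nodup_cons.1 hn).1 hj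

lemma PIr_chainB {M : Matrix ι ι ℝ} (hM : allPrincipalInvertible M) (hdet : M.det ≠ 0)
    (l : List ι) :
    ∀ (t : Finset ι) (N : Matrix ι ι ℝ), (∀ k ∈ l, k ∉ t) → l.Nodup →
      PIr M⁻¹ t N → PIr M⁻¹ (t ∪ l.toFinset) (invList l N) := by
  induction l with
  | nil => intro t N _ _ h; simpa [invList] using h
  | cons k l ih =>
    intro t N hd hn h
    have hk : k ∉ t := hd k (List.mem_cons_self)
    have hc : PIr M tᶜ N := PIr_inv_compl hdet h
    have hp : N k k ≠ 0 := pivot_mem hM (Finset.mem_compl.2 hk) hc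
    have h1 : PIr M⁻¹ (insert k t) (invStep N k) := PIr_step hk hp h
    have h2 := ih (insert k t) (invStep N k) ?_ (List.Nodup.of_cons hn) h1
    · have hset : insert k t ∪ l.toFinset = t ∪ (k :: l).toFinset := by
        ext j; simp only [Finset.mem_union, Finset.mem_insert, List.toFinset_cons]; tauto
      rw [hset] at h2
      simpa [invList] using h2
    · intro j hj
      simp only [Finset.mem_insert, not_or]
      refine ⟨?_, hd j (List.mem_cons_of_mem k hj)⟩
      rintro rfl
      exact (List.nodup_cons.1 hn).1 hj

lemma det_ne_zero_of_api {M : Matrix ι ι ℝ} (hM : allPrincipalInvertible M) : M.det ≠ 0 := by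
  have h := hM Finset.univ
  let e : {x // x ∈ (Finset.univ : Finset ι)} ≃ ι :=
    ⟨fun i => i, fun i => ⟨i, Finset.mem_univ i⟩, fun _ => rfl, fun _ => rfl⟩
  have he : (M.submatrix (fun i : (Finset.univ : Finset ι) => (i : ι))
      fun i : (Finset.univ : Finset ι) => (i : ι)) = M.submatrix e e := rfl
  rw [he, Matrix.det_submatrix_equiv_self] at h
  exact h

end Aux

/-- for a partition of the index set into `a` and `b`,
`inv_a M = inv_b M⁻¹`. -/
theorem invList_inv {ι : Type*} [Fintype ι] [DecidableEq ι]
    (M : Matrix ι ι ℝ) (hM : allPrincipalInvertible M)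
    (la lb : List ι) (hna : la.Nodup) (hnb : lb.Nodup)
    (hdisj : Disjoint la.toFinset lb.toFinset)
    (hall : ∀ i : ι, i ∈ la ∨ i ∈ lb) :
    invList la M = invList lb M⁻¹ := by
  have hdet := det_ne_zero_of_api hM
  have ha : PIr M la.toFinset (invList la M) := by
    have h := PIr_chain hM la ∅ M (by simp) hna (PIr_self M)
    simpa using h
  have hb0 : PIr M⁻¹ lb.toFinset (invList lb M⁻¹) := by
    have h := PIr_chainB hM hdet lb ∅ M⁻¹ (by simp) hnb (PIr_self M⁻¹)
    simpa using h
  have hb : PIr M lb.toFinsetᶜ (invList lb M⁻¹) := PIr_inv_compl hdet hb0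
  have hset : lb.toFinsetᶜ = la.toFinset := by
    ext i
    simp only [Finset.mem_compl, List.mem_toFinset]
    constructor
    · intro h
      rcases hall i with h' | h'
      · exact h'
      · exact absurd h' h
    · intro hia hib
      exact Finset.disjoint_left.1 hdisj (List.mem_toFinset.2 hia) (List.mem_toFinset.2 hib)
  rw [hset] at hb
  exact PIr_unique hM ha hb
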